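/- Let V be a finite set, b ∈ (0,1], and p, y : V → [0,1]; set x_e = p_e·y_e. Let I and J be independent random subsets of V, where each e ∈ V lies in I independently with probability b·y_e, and each e ∈ V lies in J independently with probability p_e. Let π_out, π_in : 2^V → 2^V be maps with π_out(A) ⊆ A and π_in(A) ⊆ A for all A ⊆ V, and let c_in ∈ [0,1]. Assume: (ii) if R is a random subset of V containing each e independently with probability b·x_e, then for every e with b·x_e > 0, Pr[e ∈ π_in(R) | e ∈ R] ≥ c_in; (iii) π_in is monotone: for all e ∈ A₁ ⊆ A₂ ⊆ V, if e ∈ π_in(A₂) then e ∈ π_in(A₁). Then for every e ∈ V, Pr[ e ∉ π_in( π_out(I) ∩ J ) and e ∈ I ∩ J ∩ π_out(I) ] ≤ (1 − c_in)·b·x_e. -/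

import Mathlib

open Finset

/-- The probability mass of the outcome `ι` in the product of independent
Bernoulli distributions where coordinate `e` equals `true` with probability `p e`. -/
noncomputable def prodWeight {V : Type*} [Fintype V] (p : V → ℝ) (ι : V → Bool) : ℝ :=
  ∏ e, (if ι e then p e else 1 - p e)

/-- The subset of `V` encoded by the Boolean outcome `ι`. -/
def outcomeSet {V : Type*} [Fintype V] (ι : V → Bool) : Finset V :=
  univ.filter (fun e => ι e = true)

section CRAux

variable {V : Type*} [Fintype V] [DecidableEq V]

lemma sum_pi_bool' (f : V → Bool → ℝ) :
    ∑ ρ : V → Bool, ∏ v, f v (ρ v) = ∏ v, ∑ a, f v a := by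
  have := Finset.prod_univ_sum (fun _ : V => (Finset.univ : Finset Bool)) f
  rw [Fintype.piFinset_univ] at this
  exact this.symm

lemma prodWeight_nonneg' (q : V → ℝ) (h0 : ∀ v, 0 ≤ q v) (h1 : ∀ v, q v ≤ 1) (ρ : V → Bool) :
    0 ≤ prodWeight q ρ :=
  Finset.prod_nonneg fun v _ => by
    by_cases h : ρ v <;> simp [h, h0 v, sub_nonneg.mpr (h1 v)]

lemma sum_prodWeight_ind' (q : V → ℝ) (e : V) :
    ∑ ρ : V → Bool, prodWeight q ρ * (if ρ e = true then (1:ℝ) else 0) = q e := by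
  have h : ∀ ρ : V → Bool, prodWeight q ρ * (if ρ e = true then (1:ℝ) else 0)
      = ∏ v, ((if ρ v then q v else 1 - q v) *
          (if v = e then (if ρ v then (1:ℝ) else 0) else 1)) := by
    intro ρ
    rw [Finset.prod_mul_distrib]
    congr 1
    rw [Finset.prod_ite_eq']
    simp
  simp_rw [h]
  rw [sum_pi_bool' (fun v a => (if a then q v else 1 - q v) *
      (if v = e then (if a then (1:ℝ) else 0) else 1))]
  have h2 : ∀ v : V, (∑ a : Bool, (if a then q v else 1 - q v) *
      (if v = e then (if a then (1:ℝ) else 0) else 1)) = if v = e then q v else 1 := by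
    intro v; by_cases hv : v = e <;> simp [hv, Fintype.sum_bool] <;> ring
  simp_rw [h2]
  simp [Finset.prod_ite_eq']

lemma outcomeSet_and' (ι ω : V → Bool) :
    outcomeSet (fun v => ι v && ω v) = outcomeSet ι ∩ outcomeSet ω := by
  ext v; simp [outcomeSet, Bool.and_eq_true]

lemma conv' (q r : V → ℝ) (f : (V → Bool) → ℝ) :
    ∑ ι : V → Bool, ∑ ω : V → Bool, prodWeight q ι * prodWeight r ω * f (fun v => ι v && ω v)
      = ∑ ρ : V → Bool, prodWeight (fun v => q v * r v) ρ * f ρ := by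
  have key : ∀ ρ : V → Bool,
      (∑ ι : V → Bool, ∑ ω : V → Bool, prodWeight q ι * prodWeight r ω *
        (if (fun v => ι v && ω v) = ρ then (1:ℝ) else 0))
      = prodWeight (fun v => q v * r v) ρ := by
    intro ρ
    have hind : ∀ ι ω : V → Bool, (if (fun v => ι v && ω v) = ρ then (1:ℝ) else 0)
        = ∏ v, (if (ι v && ω v) = ρ v then (1:ℝ) else 0) := by
      intro ι ω
      by_cases h : (fun v => ι v && ω v) = ρ
      · rw [if_pos h]
        have h' := funext_iff.mp h
        simp only [h']
        simp
      · rw [if_neg h]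
        obtain ⟨v, hv⟩ := not_forall.mp (fun hall => h (funext hall))
        exact (Finset.prod_eq_zero (Finset.mem_univ v) (by simp [hv])).symm
    have hcomb : ∀ ι ω : V → Bool, prodWeight q ι * prodWeight r ω *
        (if (fun v => ι v && ω v) = ρ then (1:ℝ) else 0)
        = ∏ v, ((if ι v then q v else 1 - q v) * (if ω v then r v else 1 - r v) *
            (if (ι v && ω v) = ρ v then (1:ℝ) else 0)) := by
      intro ι ω
      rw [hind ι ω, prodWeight, prodWeight, ← Finset.prod_mul_distrib,
        ← Finset.prod_mul_distrib]
    simp_rw [hcomb]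
    have step1 : ∀ ι : V → Bool,
        (∑ ω : V → Bool, ∏ v, ((if ι v then q v else 1 - q v) *
          (if ω v then r v else 1 - r v) * (if (ι v && ω v) = ρ v then (1:ℝ) else 0)))
        = ∏ v, ∑ c : Bool, ((if ι v then q v else 1 - q v) *
          (if c then r v else 1 - r v) * (if (ι v && c) = ρ v then (1:ℝ) else 0)) := by
      intro ι
      exact sum_pi_bool' (fun v c => (if ι v then q v else 1 - q v) *
        (if c then r v else 1 - r v) * (if (ι v && c) = ρ v then (1:ℝ) else 0))
    simp_rw [step1]
    rw [sum_pi_bool' (fun v a => ∑ c : Bool, ((if a then q v else 1 - q v) *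
        (if c then r v else 1 - r v) * (if (a && c) = ρ v then (1:ℝ) else 0)))]
    rw [prodWeight]
    apply Finset.prod_congr rfl
    intro v _
    by_cases hv : ρ v <;> simp [hv, Fintype.sum_bool] <;> ring
  have expand : ∀ ι ω : V → Bool,
      prodWeight q ι * prodWeight r ω * f (fun v => ι v && ω v)
      = ∑ ρ : V → Bool, prodWeight q ι * prodWeight r ω *
          (if (fun v => ι v && ω v) = ρ then (1:ℝ) else 0) * f ρ := by
    intro ι ω
    have h : ∀ ρ : V → Bool, prodWeight q ι * prodWeight r ω *
        (if (fun v => ι v && ω v) = ρ then (1:ℝ) else 0) * f ρ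
        = if (fun v => ι v && ω v) = ρ then
            prodWeight q ι * prodWeight r ω * f ρ else 0 := by
      intro ρ; split <;> simp
    simp_rw [h]
    simp
  simp_rw [expand]
  have h1 : ∀ ι : V → Bool, (∑ ω : V → Bool, ∑ ρ : V → Bool,
      prodWeight q ι * prodWeight r ω *
        (if (fun v => ι v && ω v) = ρ then (1:ℝ) else 0) * f ρ)
      = ∑ ρ : V → Bool, ∑ ω : V → Bool, prodWeight q ι * prodWeight r ω *
        (if (fun v => ι v && ω v) = ρ then (1:ℝ) else 0) * f ρ := fun ι => Finset.sum_comm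
  simp_rw [h1]
  rw [Finset.sum_comm]
  apply Finset.sum_congr rfl
  intro ρ _
  rw [← key ρ]
  rw [Finset.sum_mul]
  apply Finset.sum_congr rfl
  intro ι _
  rw [Finset.sum_mul]

end CRAux

/-- Intermediate CR-scheme bound: the probability that `e` survives the outer scheme
and is active, but is discarded by the monotone inner `(b, c_in)` CR-scheme, is at most
`(1 − c_in)·b·x e`. Here `I` has marginals `b·y` and the active set `J` has marginals
`p`, independently. -/
theorem crScheme_discard_bound {V : Type*} [Fintype V] [DecidableEq V]
    (b : ℝ) (hb0 : 0 < b) (hb1 : b ≤ 1)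
    (p y : V → ℝ) (hp0 : ∀ e, 0 ≤ p e) (hp1 : ∀ e, p e ≤ 1)
    (hy0 : ∀ e, 0 ≤ y e) (hy1 : ∀ e, y e ≤ 1)
    (x : V → ℝ) (hx : ∀ e, x e = p e * y e)
    (πout πin : Finset V → Finset V)
    (hπout : ∀ A, πout A ⊆ A) (hπin : ∀ A, πin A ⊆ A)
    (cin : ℝ) (hcin0 : 0 ≤ cin) (hcin1 : cin ≤ 1)
    -- (ii) π_in is a (b, c_in) CR-scheme for x
    (hCRin : ∀ e : V, 0 < b * x e →
      (∑ ρ : V → Bool, prodWeight (fun f => b * x f) ρ *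
        (if e ∈ πin (outcomeSet ρ) then (1 : ℝ) else 0))
      ≥ cin * (b * x e))
    -- (iii) π_in is monotone
    (hmono : ∀ (A₁ A₂ : Finset V) (e : V), e ∈ A₁ → A₁ ⊆ A₂ → e ∈ πin A₂ → e ∈ πin A₁)
    (e : V) :
    (∑ ι : V → Bool, ∑ ω : V → Bool,
        prodWeight (fun f => b * y f) ι * prodWeight p ω *
          (if e ∉ πin (πout (outcomeSet ι) ∩ outcomeSet ω) ∧
              e ∈ outcomeSet ι ∧ e ∈ outcomeSet ω ∧ e ∈ πout (outcomeSet ι)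
           then (1 : ℝ) else 0))
      ≤ (1 - cin) * (b * x e) := by
  set q : V → ℝ := fun f => b * y f with hqdef
  have hq0 : ∀ v, 0 ≤ q v := fun v => mul_nonneg hb0.le (hy0 v)
  have hq1 : ∀ v, q v ≤ 1 := fun v =>
    le_trans (mul_le_mul hb1 (hy1 v) (hy0 v) zero_le_one) (by norm_num)
  have hbx0 : ∀ v, 0 ≤ b * x v := fun v => by
    rw [hx v]; exact mul_nonneg hb0.le (mul_nonneg (hp0 v) (hy0 v))
  have hbx1 : ∀ v, b * x v ≤ 1 := fun v => by
    rw [hx v]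
    calc b * (p v * y v) ≤ 1 * (1 * 1) := by
          apply mul_le_mul hb1 _ (mul_nonneg (hp0 v) (hy0 v)) zero_le_one
          exact mul_le_mul (hp1 v) (hy1 v) (hy0 v) zero_le_one
      _ = 1 := by norm_num
  have hqp : (fun v => q v * p v) = fun v => b * x v := by
    funext v; rw [hx v]; ring
  -- the comparison function
  set g : (V → Bool) → ℝ := fun ρ =>
    (if e ∈ outcomeSet ρ then (1:ℝ) else 0) -
      (if e ∈ πin (outcomeSet ρ) then (1:ℝ) else 0) with hgdef
  have hg0 : ∀ ρ, 0 ≤ g ρ := by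
    intro ρ
    rw [hgdef]
    by_cases h2 : e ∈ πin (outcomeSet ρ)
    · have he : e ∈ outcomeSet ρ := hπin _ h2
      simp [h2, he]
    · simp only [h2, if_false, sub_zero]
      split <;> norm_num
  have hpoint : ∀ ι ω : V → Bool,
      (if e ∉ πin (πout (outcomeSet ι) ∩ outcomeSet ω) ∧
          e ∈ outcomeSet ι ∧ e ∈ outcomeSet ω ∧ e ∈ πout (outcomeSet ι)
       then (1:ℝ) else 0) ≤ g (fun v => ι v && ω v) := by
    intro ι ω
    by_cases h : e ∉ πin (πout (outcomeSet ι) ∩ outcomeSet ω) ∧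
        e ∈ outcomeSet ι ∧ e ∈ outcomeSet ω ∧ e ∈ πout (outcomeSet ι)
    · rw [if_pos h]
      obtain ⟨hnot, hI, hJ, hout⟩ := h
      have h1 : e ∈ outcomeSet (fun v => ι v && ω v) := by
        rw [outcomeSet_and']; exact Finset.mem_inter.mpr ⟨hI, hJ⟩
      have h2 : e ∉ πin (outcomeSet (fun v => ι v && ω v)) := by
        rw [outcomeSet_and']
        intro hcon
        exact hnot (hmono (πout (outcomeSet ι) ∩ outcomeSet ω)
          (outcomeSet ι ∩ outcomeSet ω) e
          (Finset.mem_inter.mpr ⟨hout, hJ⟩)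
          (Finset.inter_subset_inter (hπout _) (Finset.Subset.refl _)) hcon)
      rw [hgdef]
      simp [h1, h2]
    · rw [if_neg h]
      exact hg0 _
  have step1 : (∑ ι : V → Bool, ∑ ω : V → Bool,
        prodWeight (fun f => b * y f) ι * prodWeight p ω *
          (if e ∉ πin (πout (outcomeSet ι) ∩ outcomeSet ω) ∧
              e ∈ outcomeSet ι ∧ e ∈ outcomeSet ω ∧ e ∈ πout (outcomeSet ι)
           then (1 : ℝ) else 0))
      ≤ ∑ ι : V → Bool, ∑ ω : V → Bool,
          prodWeight q ι * prodWeight p ω * g (fun v => ι v && ω v) := by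
    apply Finset.sum_le_sum; intro ι _
    apply Finset.sum_le_sum; intro ω _
    exact mul_le_mul_of_nonneg_left (hpoint ι ω)
      (mul_nonneg (prodWeight_nonneg' q hq0 hq1 ι) (prodWeight_nonneg' p hp0 hp1 ω))
  refine le_trans step1 ?_
  rw [conv' q p g, hqp]
  have hsplit : (∑ ρ : V → Bool, prodWeight (fun v => b * x v) ρ * g ρ)
      = (∑ ρ : V → Bool, prodWeight (fun v => b * x v) ρ *
          (if ρ e = true then (1:ℝ) else 0))
        - (∑ ρ : V → Bool, prodWeight (fun v => b * x v) ρ *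
          (if e ∈ πin (outcomeSet ρ) then (1:ℝ) else 0)) := by
    rw [← Finset.sum_sub_distrib]
    apply Finset.sum_congr rfl
    intro ρ _
    rw [hgdef]
    have hmem : (e ∈ outcomeSet ρ) ↔ (ρ e = true) := by simp [outcomeSet]
    simp only [hmem]
    ring
  rw [hsplit, sum_prodWeight_ind' (fun v => b * x v) e]
  have hS0 : 0 ≤ ∑ ρ : V → Bool, prodWeight (fun v => b * x v) ρ *
      (if e ∈ πin (outcomeSet ρ) then (1:ℝ) else 0) := by
    apply Finset.sum_nonneg
    intro ρ _
    apply mul_nonneg (prodWeight_nonneg' _ hbx0 hbx1 ρ)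
    split <;> norm_num
  by_cases hpos : 0 < b * x e
  · have := hCRin e hpos
    nlinarith [this]
  · have hz : b * x e = 0 := le_antisymm (not_lt.mp hpos) (hbx0 e)
    rw [hz]
    linarith
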